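/- Type preservation for encoding strictly covariant record subtyping as presence polymorphism: the global type-only translation ⟦-⟧ from λ_{[]}^{≤co} to λ_{[]}^{θ}, which translates [ℓ_i:A_i]_i to ∀(θ_i)_i (θ̄_i)_i.[ℓ_i^{θ_i} : ⟦A_i, θ̄_i⟧]_i and A → B to ∀θ̄.⟦A⟧ → ⟦B, θ̄⟧ (hoisting all presence quantifiers in strictly covariant positions to the top level), maps every well-typed Δ;Γ ⊢ M : A in λ_{[]}^{≤co} to a well-typed Δ;⟦Γ⟧ ⊢ ⟦M⟧ : ⟦A⟧ in λ_{[]}^{θ}. -/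

import Mathlib

namespace Stmt16

abbrev Label := ℕ

/-- Source types of λ_{[]}^{≤co}. -/
inductive Ty : Type where
  | tvar : ℕ → Ty
  | arrow : Ty → Ty → Ty
  | record : List (Label × Ty) → Ty

/-- Presence annotations of the target calculus λ_{[]}^{θ}. -/
inductive Pre : Type where
  | abs : Pre
  | pres : Pre
  | pvar : ℕ → Pre

/-- Target types. -/
inductive PTy : Type where
  | tvar : ℕ → PTy
  | arrow : PTy → PTy → PTy
  | record : List (Label × Pre × PTy) → PTy
  | pall : PTy → PTy

/-- n-fold presence quantification. -/
def pallN : ℕ → PTy → PTy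
  | 0, A => A
  | n + 1, A => .pall (pallN n A)

mutual
/-- The number of presence variables generated for the strictly covariant
positions of a type (one per label of a strictly covariant record, plus those
of its components). -/
def npres : Ty → ℕ
  | .tvar _ => 0
  | .arrow _ B => npres B
  | .record R => npresRow R
def npresRow : List (Label × Ty) → ℕ
  | [] => 0
  | (_, A) :: R => 1 + npres A + npresRow R
end

/-- [pvar (n-1), …, pvar 0]: the bound presence variables of n quantifiers,
outermost first. -/
def varList (n : ℕ) : List Pre := (List.range n).reverse.map Pre.pvar

mutual
/-- ⟦A, P̄⟧: the body of the translation ⟦A⟧ with its top-level (hoisted)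
presence quantifiers instantiated by the list P̄.  In a record, the first
|R| presences are the annotations of the labels and the rest are distributed
over the components; quantifiers of strictly covariant positions are hoisted
to the top level. -/
def trTyBody : Ty → List Pre → PTy
  | .tvar n, _ => .tvar n
  | .arrow A B, Ps =>
      .arrow (pallN (npres A) (trTyBody A (varList (npres A)))) (trTyBody B Ps)
  | .record R, Ps =>
      .record (trRowBody R (Ps.take R.length) (Ps.drop R.length))
def trRowBody : List (Label × Ty) → List Pre → List Pre → List (Label × Pre × PTy)
  | [], _, _ => []
  | (ℓ, A) :: R, Pl, Pc =>
      (ℓ, Pl.headD Pre.abs, trTyBody A (Pc.take (npres A))) ::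
        trRowBody R Pl.tail (Pc.drop (npres A))
end

/-- ⟦A⟧ = ∀θ̄.⟦A, θ̄⟧: the type translation from λ_{[]}^{≤co} to λ_{[]}^{θ}. -/
def trTy (A : Ty) : PTy := pallN (npres A) (trTyBody A (varList (npres A)))

/-! ### Strictly covariant subtyping derivations (as data), and the
computation ρ_θ(A ≤ B) of the presence instantiations. -/

mutual
/-- Strictly covariant record subtyping: width subtyping propagated through
record components and function codomains only. -/
inductive CoSub : Ty → Ty → Type where
  | tvar (n : ℕ) : CoSub (.tvar n) (.tvar n)
  | arrow {A B B'} : CoSub B B' → CoSub (.arrow A B) (.arrow A B')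
  | record {R R'} : CoSubRow R R' → CoSub (.record R) (.record R')
/-- Row subtyping, with labels in canonical order: each field of the subtype
row is either dropped or kept (with a componentwise subtyping). -/
inductive CoSubRow : List (Label × Ty) → List (Label × Ty) → Type where
  | nil : CoSubRow [] []
  | drop {ℓ A R R'} : CoSubRow R R' → CoSubRow ((ℓ, A) :: R) R'
  | keep {ℓ A A' R R'} : CoSub A A' → CoSubRow R R' →
      CoSubRow ((ℓ, A) :: R) ((ℓ, A') :: R')
end

/-- The presence annotations for the labels of the subtype row: dropped labels
become absent, kept labels receive the fresh presence variable corresponding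
to their slot (k counts the slots of the supertype, n is the total number of
binders). -/
def coSubRowLab : {R R' : List (Label × Ty)} → CoSubRow R R' → (n k : ℕ) → List Pre
  | _, _, .nil, _, _ => []
  | _, _, .drop sr, n, k => Pre.abs :: coSubRowLab sr n k
  | _, _, .keep _ sr, n, k => Pre.pvar (n - 1 - k) :: coSubRowLab sr n (k + 1)

mutual
/-- ρ_θ(A ≤ B): the instantiation P̄ of the hoisted quantifiers of ⟦A⟧ that
produces ⟦B⟧ (n = total number of binders of ⟦B⟧, j = offset of the slots of
the current subterm of B). -/
def coSubPres : {A B : Ty} → CoSub A B → (n j : ℕ) → List Pre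
  | _, _, .tvar _, _, _ => []
  | _, _, .arrow s, n, j => coSubPres s n j
  | _, _, .record (R' := R') sr, n, j =>
      coSubRowLab sr n j ++ coSubRowComp sr n (j + R'.length)
def coSubRowComp : {R R' : List (Label × Ty)} → CoSubRow R R' → (n c : ℕ) → List Pre
  | _, _, .nil, _, _ => []
  | _, _, .drop (A := A) sr, n, c =>
      List.replicate (npres A) Pre.abs ++ coSubRowComp sr n c
  | _, _, .keep (A' := A') s sr, n, c =>
      coSubPres s n c ++ coSubRowComp sr n (c + npres A')
end


/-- Shift presence variables ≥ c up by one. -/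
def shiftPre (c : ℕ) : Pre → Pre
  | .pvar n => if n < c then .pvar n else .pvar (n + 1)
  | p => p

mutual
def shiftPTy (c : ℕ) : PTy → PTy
  | .tvar n => .tvar n
  | .arrow A B => .arrow (shiftPTy c A) (shiftPTy c B)
  | .record es => .record (shiftPEs c es)
  | .pall A => .pall (shiftPTy (c + 1) A)
def shiftPEs (c : ℕ) : List (Label × Pre × PTy) → List (Label × Pre × PTy)
  | [] => []
  | (ℓ, P, A) :: es => (ℓ, shiftPre c P, shiftPTy c A) :: shiftPEs c es
end

/-- Substitute presence type P for presence variable k. -/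
def substPre (k : ℕ) (P : Pre) : Pre → Pre
  | .pvar n => if n = k then P else if n < k then .pvar n else .pvar (n - 1)
  | p => p

mutual
def substPTy (k : ℕ) (P : Pre) : PTy → PTy
  | .tvar n => .tvar n
  | .arrow A B => .arrow (substPTy k P A) (substPTy k P B)
  | .record es => .record (substPEs k P es)
  | .pall A => .pall (substPTy (k + 1) (shiftPre 0 P) A)
def substPEs (k : ℕ) (P : Pre) : List (Label × Pre × PTy) → List (Label × Pre × PTy)
  | [] => []
  | (ℓ, Q, A) :: es => (ℓ, substPre k P Q, substPTy k P A) :: substPEs k P es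
end

/-- Type equivalence: rows are compared ignoring label order and absent labels. -/
inductive PTyEquiv : PTy → PTy → Prop where
  | refl (A) : PTyEquiv A A
  | symm {A B} : PTyEquiv A B → PTyEquiv B A
  | trans {A B C} : PTyEquiv A B → PTyEquiv B C → PTyEquiv A C
  | arrow {A A' B B'} : PTyEquiv A A' → PTyEquiv B B' →
      PTyEquiv (.arrow A B) (.arrow A' B')
  | pall {A A'} : PTyEquiv A A' → PTyEquiv (.pall A) (.pall A')
  | recordCongr {es es'} :
      es.map (fun q => (q.1, q.2.1)) = es'.map (fun q => (q.1, q.2.1)) →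
      (∀ (i : ℕ) p q, es[i]? = some p → es'[i]? = some q →
        PTyEquiv p.2.2 q.2.2) →
      PTyEquiv (.record es) (.record es')
  | recordPerm {es es'} : List.Perm es es' →
      PTyEquiv (.record es) (.record es')
  | recordAbsent {es₁ es₂ ℓ A} :
      PTyEquiv (.record (es₁ ++ (ℓ, Pre.abs, A) :: es₂)) (.record (es₁ ++ es₂))

/-- Target terms: records annotated with their (presence-annotated) type,
presence abstraction Λθ.M and presence application M P. -/
inductive PTm : Type where
  | var : ℕ → PTm
  | lam : PTy → PTm → PTm
  | app : PTm → PTm → PTm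
  | record : List (Label × PTm) → PTy → PTm
  | proj : PTm → Label → PTm
  | plam : PTm → PTm
  | papp : PTm → Pre → PTm

/-- Typing of λ_{[]}^{θ}. -/
inductive PHasTy : List PTy → PTm → PTy → Prop where
  | var {Γ n A} : Γ[n]? = some A → PHasTy Γ (.var n) A
  | lam {Γ A B M} : PHasTy (A :: Γ) M B → PHasTy Γ (.lam A M) (.arrow A B)
  | app {Γ A B M N} : PHasTy Γ M (.arrow A B) → PHasTy Γ N A → PHasTy Γ (.app M N) B
  | record {Γ} {es : List (Label × PTm)} {res : List (Label × Pre × PTy)} :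
      es.map Prod.fst = res.map Prod.fst →
      (∀ (i : ℕ) p q, es[i]? = some p → res[i]? = some q →
        PHasTy Γ (Prod.snd p) (Prod.snd (Prod.snd q))) →
      PHasTy Γ (.record es (.record res)) (.record res)
  | proj {Γ res M ℓ A} : PHasTy Γ M (.record res) →
      List.lookup ℓ res = some (Pre.pres, A) →
      PHasTy Γ (.proj M ℓ) A
  | plam {Γ M A} : PHasTy (Γ.map (shiftPTy 0)) M A → PHasTy Γ (.plam M) (.pall A)
  | papp {Γ M A P} : PHasTy Γ M (.pall A) → PHasTy Γ (.papp M P) (substPTy 0 P A)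
  | conv {Γ M A A'} : PHasTy Γ M A → PTyEquiv A A' → PHasTy Γ M A'

/-- n-fold presence abstraction. -/
def plamN : ℕ → PTm → PTm
  | 0, M => M
  | n + 1, M => .plam (plamN n M)

/-- Iterated presence application (leftmost argument instantiates the
outermost quantifier). -/
def papps (M : PTm) (Ps : List Pre) : PTm := Ps.foldl (fun m p => .papp m p) M

/-! ### Source terms and typing derivations of λ_{[]}^{≤co}. -/

/-- Source terms; `upcast M B` is M ▷ B. -/
inductive Tm : Type where
  | var : ℕ → Tm
  | lam : Ty → Tm → Tm
  | app : Tm → Tm → Tm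
  | record : List (Label × Tm) → Tm
  | proj : Tm → Label → Tm
  | upcast : Tm → Ty → Tm

mutual
inductive Deriv : List Ty → Tm → Ty → Type where
  | var {Γ n A} : Γ[n]? = some A → Deriv Γ (.var n) A
  | lam {Γ A B M} : Deriv (A :: Γ) M B → Deriv Γ (.lam A M) (.arrow A B)
  | app {Γ A B M N} : Deriv Γ M (.arrow A B) → Deriv Γ N A → Deriv Γ (.app M N) B
  | record {Γ es R} : DerivRow Γ es R → Deriv Γ (.record es) (.record R)
  | proj {Γ R M ℓ A} : Deriv Γ M (.record R) → List.lookup ℓ R = some A →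
      Deriv Γ (.proj M ℓ) A
  | upcast {Γ M A B} : Deriv Γ M A → CoSub A B → Deriv Γ (.upcast M B) B
inductive DerivRow : List Ty → List (Label × Tm) → List (Label × Ty) → Type where
  | nil {Γ} : DerivRow Γ [] []
  | cons {Γ ℓ M A es R} : Deriv Γ M A → DerivRow Γ es R →
      DerivRow Γ ((ℓ, M) :: es) ((ℓ, A) :: R)
end

/-! ### The global type-only translation from λ_{[]}^{≤co} to λ_{[]}^{θ}:
presence quantifiers of strictly covariant positions are hoisted to the top
level by instantiation and re-abstraction. -/

/-- The m presence variables for the absolute slots c, …, c+m-1 out of n. -/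
def slotVars (n c m : ℕ) : List Pre :=
  (List.range m).map (fun i => Pre.pvar (n - 1 - (c + i)))

/-- The component presence arguments used when projecting label ℓ: the
projected component receives fresh variables, all other components are
instantiated absent. -/
def projCompArgs (ℓ : Label) : List (Label × Ty) → List Pre
  | [] => []
  | (ℓ', A) :: R =>
      (if ℓ' == ℓ then varList (npres A) else List.replicate (npres A) Pre.abs)
        ++ projCompArgs ℓ R

mutual
/-- The term translation on derivations. -/
def trD : {Γ : List Ty} → {M : Tm} → {A : Ty} → Deriv Γ M A → PTm
  | _, _, _, .var (n := n) _ => .var n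
  | _, _, _, .lam (A := A) (B := B) d =>
      plamN (npres B) (.lam (trTy A) (papps (trD d) (varList (npres B))))
  | _, _, _, .app (B := B) d₁ d₂ =>
      plamN (npres B) (.app (papps (trD d₁) (varList (npres B))) (trD d₂))
  | _, _, _, .record (R := R) dr =>
      plamN (npresRow R)
        (.record (trDRow dr (npresRow R) R.length)
          (.record (trRowBody R ((varList (npresRow R)).take R.length)
            ((varList (npresRow R)).drop R.length))))
  | _, _, _, .proj (R := R) (ℓ := ℓ) (A := A) d _ =>
      plamN (npres A)
        (.proj (papps (trD d)
          ((R.map (fun p => if p.1 == ℓ then Pre.pres else Pre.abs)) ++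
            projCompArgs ℓ R)) ℓ)
  | _, _, _, .upcast (B := B) d s =>
      plamN (npres B) (papps (trD d) (coSubPres s (npres B) 0))
def trDRow : {Γ : List Ty} → {es : List (Label × Tm)} → {R : List (Label × Ty)} →
    DerivRow Γ es R → (n c : ℕ) → List (Label × PTm)
  | _, _, _, .nil, _, _ => []
  | _, _, _, .cons (ℓ := ℓ) (A := A) d dr, n, c =>
      (ℓ, papps (trD d) (slotVars n c (npres A))) :: trDRow dr n (c + npres A)
end

section Aux

theorem varList_length (n : ℕ) : (varList n).length = n := by
  simp [varList]

theorem varList_succ (n : ℕ) : varList (n + 1) = Pre.pvar n :: varList n := by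
  simp [varList, List.range_succ]

theorem slotVars_zero (n c : ℕ) : slotVars n c 0 = [] := by simp [slotVars]

theorem slotVars_succ (n c m : ℕ) :
    slotVars n c (m + 1) = Pre.pvar (n - 1 - c) :: slotVars n (c + 1) m := by
  simp [slotVars, List.range_succ_eq_map, Function.comp]
  intro a _
  congr 1
  omega

theorem slotVars_length (n c m : ℕ) : (slotVars n c m).length = m := by
  simp [slotVars]

theorem slotVars_take (n : ℕ) : ∀ (k m c : ℕ), k ≤ m →
    (slotVars n c m).take k = slotVars n c k := by
  intro k
  induction k with
  | zero => intro m c _; simp [slotVars_zero]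
  | succ k ih =>
    intro m c h
    obtain ⟨m', rfl⟩ : ∃ m', m = m' + 1 := ⟨m - 1, by omega⟩
    rw [slotVars_succ, slotVars_succ, List.take_cons]
    rw [show k + 1 - 1 = k by omega, ih m' (c+1) (by omega)]
    omega

theorem slotVars_drop (n : ℕ) : ∀ (k m c : ℕ), k ≤ m →
    (slotVars n c m).drop k = slotVars n (c + k) (m - k) := by
  intro k
  induction k with
  | zero => intro m c _; simp
  | succ k ih =>
    intro m c h
    obtain ⟨m', rfl⟩ : ∃ m', m = m' + 1 := ⟨m - 1, by omega⟩
    rw [slotVars_succ, List.drop_succ_cons, ih m' (c+1) (by omega)]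
    congr 1 <;> omega

theorem slotVars_eq_varList : ∀ (m c n : ℕ), c + m = n → slotVars n c m = varList m := by
  intro m
  induction m with
  | zero => intro c n _; simp [slotVars_zero, varList]
  | succ m ih =>
    intro c n h
    rw [slotVars_succ, varList_succ, ih (c+1) n (by omega)]
    congr 2
    omega

theorem varList_eq_slotVars (n : ℕ) : varList n = slotVars n 0 n :=
  (slotVars_eq_varList n 0 n (by omega)).symm

theorem varList_map_id {n : ℕ} (f : Pre → Pre)
    (h : ∀ i, i < n → f (Pre.pvar i) = Pre.pvar i) : (varList n).map f = varList n := by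
  induction n with
  | zero => simp [varList]
  | succ n ih =>
    rw [varList_succ, List.map_cons, h n (by omega), ih (fun i hi => h i (by omega))]

end Aux

section DeBruijn

def shiftIter (m : ℕ) (P : Pre) : Pre := (shiftPre 0)^[m] P

theorem shiftIter_pvar (m i : ℕ) : shiftIter m (Pre.pvar i) = Pre.pvar (i + m) := by
  induction m with
  | zero => simp [shiftIter]
  | succ m ih =>
    simp only [shiftIter, Function.iterate_succ_apply'] at *
    rw [ih]
    simp [shiftPre]
    omega

theorem shiftIter_abs (m : ℕ) : shiftIter m Pre.abs = Pre.abs := by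
  induction m with
  | zero => rfl
  | succ m ih => simp only [shiftIter, Function.iterate_succ_apply'] at *; rw [ih]; rfl

theorem shiftIter_pres (m : ℕ) : shiftIter m Pre.pres = Pre.pres := by
  induction m with
  | zero => rfl
  | succ m ih => simp only [shiftIter, Function.iterate_succ_apply'] at *; rw [ih]; rfl

theorem shiftIter_zero (P : Pre) : shiftIter 0 P = P := rfl

theorem shiftIter_succ_inner (m : ℕ) (P : Pre) :
    shiftIter (m + 1) P = shiftIter m (shiftPre 0 P) := by
  simp [shiftIter, Function.iterate_succ_apply]

theorem subst_pallN (m : ℕ) : ∀ (k : ℕ) (P : Pre) (C : PTy),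
    substPTy k P (pallN m C) = pallN m (substPTy (k + m) (shiftIter m P) C) := by
  induction m with
  | zero => intro k P C; simp [pallN, shiftIter]
  | succ m ih =>
    intro k P C
    show substPTy k P (.pall (pallN m C)) = _
    rw [substPTy]
    rw [ih (k+1) (shiftPre 0 P) C]
    show PTy.pall (pallN m _) = PTy.pall (pallN m _)
    rw [← shiftIter_succ_inner, show k + 1 + m = k + m + 1 from by omega]
    rfl

theorem shift_pallN (m : ℕ) : ∀ (c : ℕ) (C : PTy),
    shiftPTy c (pallN m C) = pallN m (shiftPTy (c + m) C) := by
  induction m with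
  | zero => intro c C; simp [pallN]
  | succ m ih =>
    intro c C
    show shiftPTy c (.pall (pallN m C)) = _
    rw [shiftPTy, ih (c+1) C, show c + 1 + m = c + m + 1 from by omega]
    rfl

theorem substPre_lt {k i : ℕ} (P : Pre) (h : i < k) :
    substPre k P (Pre.pvar i) = Pre.pvar i := by
  show (if i = k then P else if i < k then Pre.pvar i else Pre.pvar (i - 1)) = _
  rw [if_neg (by omega), if_pos h]

theorem shiftPre_lt {c i : ℕ} (h : i < c) : shiftPre c (Pre.pvar i) = Pre.pvar i := by
  show (if i < c then Pre.pvar i else Pre.pvar (i + 1)) = _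
  rw [if_pos h]

end DeBruijn

section MapTr

theorem headD_map (f : Pre → Pre) (hf : f Pre.abs = Pre.abs) (l : List Pre) :
    (l.map f).headD Pre.abs = f (l.headD Pre.abs) := by
  cases l <;> simp [hf]

theorem shiftPre_abs (c : ℕ) : shiftPre c Pre.abs = Pre.abs := rfl
theorem substPre_abs (k : ℕ) (P : Pre) : substPre k P Pre.abs = Pre.abs := rfl

mutual

theorem shift_trTyBody : ∀ (A : Ty) (Qs : List Pre) (c : ℕ),
    shiftPTy c (trTyBody A Qs) = trTyBody A (Qs.map (shiftPre c))
  | .tvar n, Qs, c => by simp [trTyBody, shiftPTy]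
  | .arrow A B, Qs, c => by
      rw [trTyBody, trTyBody, shiftPTy, shift_pallN, shift_trTyBody A _ _,
        varList_map_id _ (fun i hi => shiftPre_lt (by omega)),
        shift_trTyBody B Qs c]
  | .record R, Qs, c => by
      rw [trTyBody, trTyBody, shiftPTy, shift_trRowBody R _ _ c,
        List.map_take, List.map_drop]

theorem shift_trRowBody : ∀ (R : List (Label × Ty)) (Pl Pc : List Pre) (c : ℕ),
    shiftPEs c (trRowBody R Pl Pc) =
      trRowBody R (Pl.map (shiftPre c)) (Pc.map (shiftPre c))
  | [], _, _, _ => by rw [trRowBody, trRowBody]; rfl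
  | (ℓ, A) :: R, Pl, Pc, c => by
      rw [trRowBody, trRowBody, shiftPEs, shift_trTyBody A _ c,
        shift_trRowBody R _ _ c, headD_map _ (shiftPre_abs c),
        List.map_take, List.map_tail, List.map_drop]

end

mutual

theorem subst_trTyBody : ∀ (A : Ty) (Qs : List Pre) (k : ℕ) (P : Pre),
    substPTy k P (trTyBody A Qs) = trTyBody A (Qs.map (substPre k P))
  | .tvar n, Qs, k, P => by simp [trTyBody, substPTy]
  | .arrow A B, Qs, k, P => by
      rw [trTyBody, trTyBody, substPTy, subst_pallN, subst_trTyBody A _ _ _,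
        varList_map_id _ (fun i hi => substPre_lt _ (by omega)),
        subst_trTyBody B Qs k P]
  | .record R, Qs, k, P => by
      rw [trTyBody, trTyBody, substPTy, subst_trRowBody R _ _ k P,
        List.map_take, List.map_drop]

theorem subst_trRowBody : ∀ (R : List (Label × Ty)) (Pl Pc : List Pre) (k : ℕ) (P : Pre),
    substPEs k P (trRowBody R Pl Pc) =
      trRowBody R (Pl.map (substPre k P)) (Pc.map (substPre k P))
  | [], _, _, _, _ => by rw [trRowBody, trRowBody]; rfl
  | (ℓ, A) :: R, Pl, Pc, k, P => by
      rw [trRowBody, trRowBody, substPEs, subst_trTyBody A _ k P,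
        subst_trRowBody R _ _ k P, headD_map _ (substPre_abs k P),
        List.map_take, List.map_tail, List.map_drop]

end

theorem shift_trTy (A : Ty) (c : ℕ) : shiftPTy c (trTy A) = trTy A := by
  rw [trTy, shift_pallN, shift_trTyBody,
    varList_map_id _ (fun i hi => shiftPre_lt (by omega))]

theorem subst_trTy (A : Ty) (k : ℕ) (P : Pre) : substPTy k P (trTy A) = trTy A := by
  rw [trTy, subst_pallN, subst_trTyBody,
    varList_map_id _ (fun i hi => substPre_lt _ (by omega))]

end MapTr

section Inst

def instTy : List Pre → PTy → PTy
  | [], C => C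
  | P :: Ps, C => instTy Ps (substPTy Ps.length (shiftIter Ps.length P) C)

def instList : List Pre → List Pre → List Pre
  | [], Qs => Qs
  | P :: Ps, Qs => instList Ps (Qs.map (substPre Ps.length (shiftIter Ps.length P)))

theorem papps_hasTy : ∀ (Ps : List Pre) {Γ : List PTy} {M : PTm} {C : PTy},
    PHasTy Γ M (pallN Ps.length C) → PHasTy Γ (papps M Ps) (instTy Ps C)
  | [], _, _, _, h => h
  | P :: Ps, Γ, M, C, h => by
      show PHasTy Γ (papps (M.papp P) Ps) (instTy Ps _)
      apply papps_hasTy Ps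
      have h2 : PHasTy Γ (M.papp P) (substPTy 0 P (pallN Ps.length C)) :=
        PHasTy.papp h
      rwa [subst_pallN, Nat.zero_add] at h2

theorem instTy_trTyBody : ∀ (Ps : List Pre) (A : Ty) (Qs : List Pre),
    instTy Ps (trTyBody A Qs) = trTyBody A (instList Ps Qs)
  | [], _, _ => rfl
  | P :: Ps, A, Qs => by
      rw [instTy, subst_trTyBody, instTy_trTyBody Ps, instList]

theorem substPre_shiftIter_succ (m : ℕ) (P E : Pre) :
    substPre m (shiftIter m P) (shiftIter (m + 1) E) = shiftIter m E := by
  cases E with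
  | pvar i =>
      rw [shiftIter_pvar, shiftIter_pvar]
      show (if i + (m + 1) = m then _ else if i + (m + 1) < m then _ else
        Pre.pvar (i + (m + 1) - 1)) = _
      rw [if_neg (by omega), if_neg (by omega)]
      congr 1
  | abs => rw [shiftIter_abs, shiftIter_abs]; rfl
  | pres => rw [shiftIter_pres, shiftIter_pres]; rfl

theorem substPre_self (m : ℕ) (P : Pre) :
    substPre m P (Pre.pvar m) = P := by
  show (if m = m then P else _) = P
  rw [if_pos rfl]

theorem instList_key : ∀ (Ps Es : List Pre),
    instList Ps (Es.map (shiftIter Ps.length) ++ varList Ps.length) = Es ++ Ps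
  | [], Es => by
      simp [instList, varList, show shiftIter 0 = id from rfl]
  | P :: Ps, Es => by
      rw [instList]
      have hlen : (P :: Ps).length = Ps.length + 1 := rfl
      rw [hlen, List.map_append, List.map_map, varList_succ, List.map_cons,
        substPre_self, varList_map_id _ (fun i hi => substPre_lt _ hi)]
      have hcomp : (substPre Ps.length (shiftIter Ps.length P)) ∘ (shiftIter (Ps.length + 1))
          = shiftIter Ps.length := by
        funext E; exact substPre_shiftIter_succ Ps.length P E
      rw [hcomp]
      have : Es.map (shiftIter Ps.length) ++ shiftIter Ps.length P :: varList Ps.length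
          = (Es ++ [P]).map (shiftIter Ps.length) ++ varList Ps.length := by
        simp
      rw [this, instList_key Ps (Es ++ [P]), List.append_assoc]
      rfl

theorem instList_varList (Ps : List Pre) :
    instList Ps (varList Ps.length) = Ps := by
  have := instList_key Ps []
  simpa using this

theorem papps_trTy {Γ : List PTy} {M : PTm} {A : Ty} {Ps : List Pre}
    (h : PHasTy Γ M (trTy A)) (hl : Ps.length = npres A) :
    PHasTy Γ (papps M Ps) (trTyBody A Ps) := by
  have h' : PHasTy Γ M (pallN Ps.length (trTyBody A (varList Ps.length))) := by
    rw [hl]; exact h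
  have h2 := papps_hasTy Ps h'
  rwa [instTy_trTyBody, instList_varList] at h2

theorem plamN_hasTy {Γ : List PTy} {M : PTm} {C : PTy}
    (hΓ : Γ.map (shiftPTy 0) = Γ) :
    ∀ (n : ℕ), PHasTy Γ M C → PHasTy Γ (plamN n M) (pallN n C)
  | 0, h => h
  | n + 1, h => by
      show PHasTy Γ (.plam (plamN n M)) (.pall (pallN n C))
      apply PHasTy.plam
      rw [hΓ]
      exact plamN_hasTy hΓ n h

theorem trCtx_shift (Γ : List Ty) : (Γ.map trTy).map (shiftPTy 0) = Γ.map trTy := by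
  rw [List.map_map]
  apply List.map_congr_left
  intro A _
  exact shift_trTy A 0

end Inst

section Lengths

def npresComps : List (Label × Ty) → ℕ
  | [] => 0
  | (_, A) :: R => npres A + npresComps R

theorem npresRow_eq : ∀ (R : List (Label × Ty)), npresRow R = R.length + npresComps R
  | [] => rfl
  | (ℓ, A) :: R => by
      rw [npresRow, npresComps, npresRow_eq R, List.length_cons]
      omega

theorem coSubRowLab_length : ∀ {R R' : List (Label × Ty)} (sr : CoSubRow R R') (n k : ℕ),
    (coSubRowLab sr n k).length = R.length
  | _, _, .nil, _, _ => rfl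
  | _, _, .drop sr, n, k => by
      rw [coSubRowLab, List.length_cons, coSubRowLab_length sr n k, List.length_cons]
  | _, _, .keep s sr, n, k => by
      rw [coSubRowLab, List.length_cons, coSubRowLab_length sr n (k+1), List.length_cons]

mutual

theorem coSubPres_length : ∀ {A B : Ty} (s : CoSub A B) (n j : ℕ),
    (coSubPres s n j).length = npres A
  | _, _, .tvar _, _, _ => rfl
  | _, _, .arrow s, n, j => by
      rw [coSubPres, coSubPres_length s n j, npres]
  | _, _, .record sr, n, j => by
      rw [coSubPres, List.length_append, coSubRowLab_length, coSubRowComp_length,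
        npres, npresRow_eq]

theorem coSubRowComp_length : ∀ {R R' : List (Label × Ty)} (sr : CoSubRow R R') (n c : ℕ),
    (coSubRowComp sr n c).length = npresComps R
  | _, _, .nil, _, _ => rfl
  | _, _, .drop sr, n, c => by
      rw [coSubRowComp, List.length_append, List.length_replicate,
        coSubRowComp_length sr n c, npresComps]
  | _, _, .keep s sr, n, c => by
      rw [coSubRowComp, List.length_append, coSubPres_length s,
        coSubRowComp_length sr, npresComps]

end

theorem projCompArgs_length : ∀ (ℓ : Label) (R : List (Label × Ty)),
    (projCompArgs ℓ R).length = npresComps R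
  | _, [] => rfl
  | ℓ, (ℓ', A) :: R => by
      rw [projCompArgs, List.length_append, projCompArgs_length ℓ R, npresComps]
      by_cases h : ℓ' == ℓ <;> simp [h, varList_length]

theorem trRowBody_map_fst : ∀ (R : List (Label × Ty)) (Pl Pc : List Pre),
    (trRowBody R Pl Pc).map Prod.fst = R.map Prod.fst
  | [], _, _ => rfl
  | (ℓ, A) :: R, Pl, Pc => by
      rw [trRowBody, List.map_cons, List.map_cons, trRowBody_map_fst R]

theorem trDRow_map_fst : ∀ {Γ : List Ty} {es : List (Label × Tm)}
    {R : List (Label × Ty)} (dr : DerivRow Γ es R) (n c : ℕ),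
    (trDRow dr n c).map Prod.fst = R.map Prod.fst
  | _, _, _, .nil, _, _ => rfl
  | _, _, _, .cons d dr, n, c => by
      rw [trDRow, List.map_cons, List.map_cons, trDRow_map_fst dr]

theorem take_varList_append (n : ℕ) (l : List Pre) :
    (varList n ++ l).take n = varList n := by
  have := List.take_left (l₁ := varList n) (l₂ := l)
  rwa [varList_length] at this

theorem drop_replicate_append (n : ℕ) (l : List Pre) :
    (List.replicate n Pre.abs ++ l).drop n = l := by
  have := List.drop_left (l₁ := List.replicate n Pre.abs) (l₂ := l)
  rwa [List.length_replicate] at this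

theorem lookup_trRowBody : ∀ (R : List (Label × Ty)) (ℓ : Label) (A : Ty),
    List.lookup ℓ R = some A →
    List.lookup ℓ (trRowBody R
        (R.map (fun p => if p.1 == ℓ then Pre.pres else Pre.abs))
        (projCompArgs ℓ R)) = some (Pre.pres, trTyBody A (varList (npres A)))
  | [], ℓ, A, h => by simp [List.lookup] at h
  | (ℓ', A') :: R, ℓ, A, h => by
      rw [List.map_cons, projCompArgs, trRowBody]
      by_cases hc : ℓ' = ℓ
      · subst hc
        simp only [List.lookup, beq_self_eq_true] at h ⊢
        injection h with h
        subst h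
        simp only [if_true, List.headD_cons]
        rw [take_varList_append]
      · have hb : (ℓ' == ℓ) = false := by simp [hc]
        have hb' : (ℓ == ℓ') = false := by simp [Ne.symm hc]
        simp only [List.lookup, hb'] at h
        simp only [List.lookup, hb, hb', Bool.false_eq_true, if_false, List.tail_cons]
        rw [drop_replicate_append]
        exact lookup_trRowBody R ℓ A h

end Lengths

section Equiv

def eraseAbs : List (Label × Pre × PTy) → List (Label × Pre × PTy)
  | [] => []
  | (_, Pre.abs, _) :: es => eraseAbs es
  | (ℓ, Pre.pres, A) :: es => (ℓ, Pre.pres, A) :: eraseAbs es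
  | (ℓ, Pre.pvar i, A) :: es => (ℓ, Pre.pvar i, A) :: eraseAbs es

theorem eraseAbs_append_equiv : ∀ (es pre : List (Label × Pre × PTy)),
    PTyEquiv (.record (pre ++ es)) (.record (pre ++ eraseAbs es))
  | [], pre => PTyEquiv.refl _
  | (ℓ, Pre.abs, A) :: es, pre => by
      rw [eraseAbs]
      exact PTyEquiv.trans PTyEquiv.recordAbsent (eraseAbs_append_equiv es pre)
  | (ℓ, Pre.pres, A) :: es, pre => by
      rw [eraseAbs]
      have h := eraseAbs_append_equiv es (pre ++ [(ℓ, Pre.pres, A)])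
      rwa [List.append_assoc, List.append_assoc, List.singleton_append] at h
  | (ℓ, Pre.pvar i, A) :: es, pre => by
      rw [eraseAbs]
      have h := eraseAbs_append_equiv es (pre ++ [(ℓ, Pre.pvar i, A)])
      rwa [List.append_assoc, List.append_assoc, List.singleton_append] at h

theorem eraseAbs_equiv (es : List (Label × Pre × PTy)) :
    PTyEquiv (.record es) (.record (eraseAbs es)) := by
  have h := eraseAbs_append_equiv es []
  rwa [List.nil_append, List.nil_append] at h

mutual

theorem coSub_equiv : ∀ {A B : Ty} (s : CoSub A B) (n j : ℕ),
    PTyEquiv (trTyBody A (coSubPres s n j)) (trTyBody B (slotVars n j (npres B)))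
  | _, _, .tvar m, n, j => by
      rw [coSubPres]
      exact PTyEquiv.refl _
  | _, _, .arrow (A := A) (B := B) (B' := B') s, n, j => by
      rw [coSubPres, trTyBody, trTyBody, npres]
      exact PTyEquiv.arrow (PTyEquiv.refl _) (coSub_equiv s n j)
  | _, _, .record (R := R) (R' := R') sr, n, j => by
      rw [coSubPres, trTyBody, trTyBody, npres,
        show R.length = (coSubRowLab sr n j).length from (coSubRowLab_length sr n j).symm,
        List.take_left, List.drop_left, npresRow_eq R',
        slotVars_take n R'.length (R'.length + npresComps R') j (by omega),
        slotVars_drop n R'.length (R'.length + npresComps R') j (by omega),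
        show R'.length + npresComps R' - R'.length = npresComps R' from by omega]
      exact PTyEquiv.trans (eraseAbs_equiv _)
        (PTyEquiv.recordCongr (coSubRow_equiv sr n j (j + R'.length)).1
          (coSubRow_equiv sr n j (j + R'.length)).2)

theorem coSubRow_equiv : ∀ {R R' : List (Label × Ty)} (sr : CoSubRow R R') (n j c : ℕ),
    ((eraseAbs (trRowBody R (coSubRowLab sr n j) (coSubRowComp sr n c))).map
        (fun q => (q.1, q.2.1))
      = (trRowBody R' (slotVars n j R'.length)
          (slotVars n c (npresComps R'))).map (fun q => (q.1, q.2.1)))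
    ∧ (∀ (i : ℕ) p q,
        (eraseAbs (trRowBody R (coSubRowLab sr n j) (coSubRowComp sr n c)))[i]?
          = some p →
        (trRowBody R' (slotVars n j R'.length)
          (slotVars n c (npresComps R')))[i]? = some q →
        PTyEquiv p.2.2 q.2.2)
  | _, _, .nil, n, j, c => by
      rw [coSubRowLab, coSubRowComp, trRowBody, trRowBody, eraseAbs]
      exact ⟨rfl, by intro i p q hp _; simp at hp⟩
  | _, _, .drop (A := A) sr, n, j, c => by
      rw [coSubRowLab, coSubRowComp, trRowBody, List.headD_cons, List.tail_cons,
        drop_replicate_append, eraseAbs]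
      exact coSubRow_equiv sr n j c
  | _, _, .keep (ℓ := ℓ) (A := A) (A' := A') (R' := R') s sr, n, j, c => by
      rw [coSubRowLab, coSubRowComp, trRowBody, List.headD_cons, List.tail_cons,
        show npres A = (coSubPres s n c).length from (coSubPres_length s n c).symm,
        List.take_left, List.drop_left, eraseAbs,
        npresComps, List.length_cons,
        slotVars_succ, trRowBody, List.headD_cons, List.tail_cons,
        slotVars_take n (npres A') (npres A' + npresComps R') c (by omega),
        slotVars_drop n (npres A') (npres A' + npresComps R') c (by omega),
        show npres A' + npresComps R' - npres A' = npresComps R' from by omega]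
      constructor
      · rw [List.map_cons, List.map_cons, (coSubRow_equiv sr n (j+1) (c + npres A')).1]
      · intro i p q hp hq
        match i with
        | 0 =>
            rw [List.getElem?_cons_zero] at hp hq
            injection hp with hp; injection hq with hq
            subst hp; subst hq
            exact coSub_equiv s n c
        | i + 1 =>
            rw [List.getElem?_cons_succ] at hp hq
            exact (coSubRow_equiv sr n (j+1) (c + npres A')).2 i p q hp hq

end

end Equiv

section Main

mutual

theorem trD_hasTy : ∀ {Γ : List Ty} {M : Tm} {A : Ty} (d : Deriv Γ M A),
    PHasTy (Γ.map trTy) (trD d) (trTy A)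
  | Γ, _, A, .var (n := n) h => by
      rw [trD]
      exact PHasTy.var (by rw [List.getElem?_map, h]; rfl)
  | Γ, _, _, .lam (A := A) (B := B) d => by
      rw [trD,
        show trTy (Ty.arrow A B)
            = pallN (npres B) (.arrow (trTy A) (trTyBody B (varList (npres B)))) from by
          rw [trTy, npres, trTyBody]; rfl]
      apply plamN_hasTy (trCtx_shift Γ)
      apply PHasTy.lam
      have h := trD_hasTy d
      rw [List.map_cons] at h
      exact papps_trTy h (varList_length _)
  | Γ, _, _, .app (A := A) (B := B) d₁ d₂ => by
      rw [trD,
        show trTy B = pallN (npres B) (trTyBody B (varList (npres B))) from rfl]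
      apply plamN_hasTy (trCtx_shift Γ)
      have h₁ := papps_trTy (trD_hasTy d₁)
        (Ps := varList (npres B)) (by rw [npres, varList_length])
      rw [trTyBody] at h₁
      exact PHasTy.app h₁ (trD_hasTy d₂)
  | Γ, _, _, .record (R := R) dr => by
      have hdrop : (varList (npresRow R)).drop R.length
          = slotVars (npresRow R) R.length (npresComps R) := by
        rw [varList_eq_slotVars,
          slotVars_drop _ R.length (npresRow R) 0 (by rw [npresRow_eq]; omega),
          Nat.zero_add]
        congr 1
        rw [npresRow_eq]
        omega
      rw [trD,
        show trTy (Ty.record R)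
            = pallN (npresRow R) (.record (trRowBody R
                ((varList (npresRow R)).take R.length)
                ((varList (npresRow R)).drop R.length))) from by
          rw [trTy, npres, trTyBody],
        hdrop]
      apply plamN_hasTy (trCtx_shift Γ)
      apply PHasTy.record
      · rw [trDRow_map_fst dr, trRowBody_map_fst]
      · intro i p q hp hq
        exact trDRow_hasTy dr (npresRow R) R.length _ i p q hp hq
  | Γ, _, _, .proj (R := R) (ℓ := ℓ) (A := A) d hl => by
      rw [trD,
        show trTy A = pallN (npres A) (trTyBody A (varList (npres A))) from rfl]
      apply plamN_hasTy (trCtx_shift Γ)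
      have h := papps_trTy (trD_hasTy d)
        (Ps := (R.map (fun p => if p.1 == ℓ then Pre.pres else Pre.abs))
          ++ projCompArgs ℓ R)
        (by rw [List.length_append, List.length_map, projCompArgs_length, npres,
          npresRow_eq])
      rw [trTyBody,
        show R.length
            = ((R.map (fun p => if p.1 == ℓ then Pre.pres else Pre.abs))).length from
          (List.length_map _).symm,
        List.take_left, List.drop_left] at h
      exact PHasTy.proj h (lookup_trRowBody R ℓ A hl)
  | Γ, _, _, .upcast (A := A) (B := B) d s => by
      rw [trD,
        show trTy B = pallN (npres B) (trTyBody B (varList (npres B))) from rfl]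
      apply plamN_hasTy (trCtx_shift Γ)
      have h := papps_trTy (trD_hasTy d) (coSubPres_length s (npres B) 0)
      have e := coSub_equiv s (npres B) 0
      rw [slotVars_eq_varList (npres B) 0 (npres B) (by omega)] at e
      exact PHasTy.conv h e

theorem trDRow_hasTy : ∀ {Γ : List Ty} {es : List (Label × Tm)}
    {R : List (Label × Ty)} (dr : DerivRow Γ es R) (n c : ℕ) (Pl : List Pre)
    (i : ℕ) (p : Label × PTm) (q : Label × Pre × PTy),
    (trDRow dr n c)[i]? = some p →
    (trRowBody R Pl (slotVars n c (npresComps R)))[i]? = some q →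
    PHasTy (Γ.map trTy) p.2 q.2.2
  | _, _, _, .nil, n, c, Pl, i, p, q, hp, hq => by
      rw [trDRow] at hp
      simp at hp
  | _, _, _, .cons (ℓ := ℓ) (A := A) (R := R) d dr, n, c, Pl, i, p, q, hp, hq => by
      rw [trDRow] at hp
      rw [npresComps, trRowBody,
        slotVars_take n (npres A) (npres A + npresComps R) c (by omega),
        slotVars_drop n (npres A) (npres A + npresComps R) c (by omega),
        show npres A + npresComps R - npres A = npresComps R from by omega] at hq
      match i with
      | 0 =>
          rw [List.getElem?_cons_zero] at hp hq
          injection hp with hp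
          injection hq with hq
          subst hp; subst hq
          exact papps_trTy (trD_hasTy d) (slotVars_length _ _ _)
      | i + 1 =>
          rw [List.getElem?_cons_succ] at hp hq
          exact trDRow_hasTy dr n (c + npres A) Pl.tail i p q hp hq

end

end Main

/-!
STATEMENT 16: Type preservation for encoding strictly covariant record
subtyping as presence polymorphism: every well-typed Δ;Γ ⊢ M : A of
λ_{[]}^{≤co} translates to a well-typed Δ;⟦Γ⟧ ⊢ ⟦M⟧ : ⟦A⟧ of λ_{[]}^{θ}.
-/
theorem type_preservation {Γ : List Ty} {M : Tm} {A : Ty}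
    (d : Deriv Γ M A) : PHasTy (Γ.map trTy) (trD d) (trTy A) :=
  trD_hasTy d

end Stmt16
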